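/- Let $X$ be a Banach space and $x \in S_X$. If there exists a finite-rank bounded linear operator $T$ on $X$ such that $\|x - Tx\| + \|\mathrm{Id} - T\| < 2$, then $x$ is not a super $\Delta$-point. -/

import Mathlib

open Metric Set Pointwise Filter Topology

variable {X : Type*} [NormedAddCommGroup X] [NormedSpace ℝ X]

def sliceSet (f : X →L[ℝ] ℝ) (δ : ℝ) : Set X :=
  {y ∈ closedBall (0 : X) 1 | 1 - δ < f y}

def IsSlice (S : Set X) : Prop :=
  ∃ (f : X →L[ℝ] ℝ) (δ : ℝ), ‖f‖ = 1 ∧ 0 < δ ∧ S = sliceSet f δ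

def IsCCS (C : Set X) : Prop :=
  ∃ (n : ℕ) (l : Fin n → ℝ) (S : Fin n → Set X),
    (∀ i, 0 < l i) ∧ (∑ i, l i) = 1 ∧ (∀ i, IsSlice (S i)) ∧
    C = ∑ i, l i • S i

def RelWeakOpen (V : Set X) : Prop :=
  ∃ U : Set X, IsOpen (show Set (WeakSpace ℝ X) from U) ∧ V = U ∩ closedBall 0 1

def weakClosure (A : Set X) : Set X :=
  @closure (WeakSpace ℝ X) _ A

def SuperDeltaPoint (x : X) : Prop :=
  ∀ V : Set X, RelWeakOpen V → x ∈ V → ∀ ε > 0, ∃ y ∈ V, 2 - ε < ‖x - y‖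

def SuperDaugavetPoint (x : X) : Prop :=
  ∀ V : Set X, RelWeakOpen V → V.Nonempty → ∀ ε > 0, ∃ y ∈ V, 2 - ε < ‖x - y‖

def CcsDeltaPoint (x : X) : Prop :=
  ∀ C : Set X, IsCCS C → x ∈ C → ∀ ε > 0, ∃ y ∈ C, 2 - ε < ‖x - y‖

def CcsDaugavetPoint (x : X) : Prop :=
  ∀ C : Set X, IsCCS C → ∀ ε > 0, ∃ y ∈ C, 2 - ε < ‖x - y‖

theorem weakSpace_t2 {E : Type*} [NormedAddCommGroup E] [NormedSpace ℝ E] :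
    T2Space (WeakSpace ℝ E) := by
  refine ⟨fun a b hab => ?_⟩
  obtain ⟨f, hf⟩ := SeparatingDual.exists_ne_zero (R := ℝ) (V := E)
    (sub_ne_zero.mpr (show (a : E) ≠ b from hab))
  have hc : Continuous fun y : WeakSpace ℝ E => f y :=
    WeakBilin.eval_continuous (topDualPairing ℝ E).flip f
  refine separated_by_continuous hc ?_
  exact fun h' => hf ((map_sub f (a : E) b).trans (sub_eq_zero.mpr h'))

theorem not_superDelta_of_finiteRank {X : Type*} [NormedAddCommGroup X]
    [NormedSpace ℝ X] [CompleteSpace X] (x : X) (hx : ‖x‖ = 1)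
    (T : X →L[ℝ] X) (hT : FiniteDimensional ℝ (LinearMap.range T.toLinearMap))
    (h : ‖x - T x‖ + ‖ContinuousLinearMap.id ℝ X - T‖ < 2) :
    ¬ SuperDeltaPoint x := by
  intro hSD
  set δ := 2 - (‖x - T x‖ + ‖ContinuousLinearMap.id ℝ X - T‖) with hδ
  have hδ0 : 0 < δ := by simp only [hδ]; linarith
  set F := LinearMap.range T.toLinearMap with hF
  haveI : FiniteDimensional ℝ F := hT
  let S : X →L[ℝ] F := T.codRestrict F (fun y => LinearMap.mem_range_self _ y)
  haveI : T2Space (WeakSpace ℝ F) := weakSpace_t2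
  haveI : FiniteDimensional ℝ (WeakSpace ℝ F) := hT
  haveI : ContinuousSMul ℝ (WeakSpace ℝ F) :=
    WeakBilin.instContinuousSMul (topDualPairing ℝ (F : Type _)).flip
  have hι : Continuous ((toWeakSpace ℝ (F : Type _)).symm.toLinearMap) :=
    LinearMap.continuous_of_finiteDimensional _
  let φ : WeakSpace ℝ X → F := fun y => (toWeakSpace ℝ (F : Type _)).symm (WeakSpace.map S y)
  have hφ : Continuous φ := hι.comp (WeakSpace.map S).continuous
  let U : Set X := {y : X | ‖S y - S x‖ < δ / 3}
  have hU : IsOpen (show Set (WeakSpace ℝ X) from U) := by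
    have : (show Set (WeakSpace ℝ X) from U) = φ ⁻¹' (Metric.ball (S x) (δ / 3)) := by
      ext y
      simp only [mem_preimage, Metric.mem_ball, dist_eq_norm]
      exact Iff.rfl
    rw [this]
    exact Metric.isOpen_ball.preimage hφ
  have hxU : x ∈ U := by
    show ‖S x - S x‖ < δ / 3
    simpa using by positivity
  have hxB : x ∈ closedBall (0 : X) 1 := by
    simp [mem_closedBall_zero_iff, hx]
  obtain ⟨y, ⟨hyU, hyB⟩, hy2⟩ :=
    hSD (U ∩ closedBall 0 1) ⟨U, hU, rfl⟩ ⟨hxU, hxB⟩ (δ / 3) (by positivity)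
  have hy1 : ‖y‖ ≤ 1 := mem_closedBall_zero_iff.mp hyB
  have hTxy : ‖T x - T y‖ < δ / 3 := by
    have : ‖S y - S x‖ < δ / 3 := hyU
    have hcoe : ‖S y - S x‖ = ‖T y - T x‖ := rfl
    rw [hcoe] at this
    rwa [norm_sub_rev] at this
  have hTy : ‖T y - y‖ ≤ ‖ContinuousLinearMap.id ℝ X - T‖ := by
    have h1 : ‖(ContinuousLinearMap.id ℝ X - T) y‖ ≤ ‖ContinuousLinearMap.id ℝ X - T‖ * ‖y‖ :=
      (ContinuousLinearMap.id ℝ X - T).le_opNorm y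
    have h2 : (ContinuousLinearMap.id ℝ X - T) y = y - T y := by
      simp [ContinuousLinearMap.sub_apply]
    rw [h2] at h1
    rw [norm_sub_rev]
    calc ‖y - T y‖ ≤ ‖ContinuousLinearMap.id ℝ X - T‖ * ‖y‖ := h1
      _ ≤ ‖ContinuousLinearMap.id ℝ X - T‖ * 1 := by
          exact mul_le_mul_of_nonneg_left hy1 (norm_nonneg _)
      _ = _ := mul_one _
  have hxy : ‖x - y‖ ≤ ‖x - T x‖ + ‖T x - T y‖ + ‖T y - y‖ := by
    calc ‖x - y‖ = ‖(x - T x) + (T x - T y) + (T y - y)‖ := by congr 1; abel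
      _ ≤ ‖(x - T x) + (T x - T y)‖ + ‖T y - y‖ := norm_add_le _ _
      _ ≤ ‖x - T x‖ + ‖T x - T y‖ + ‖T y - y‖ := by
          gcongr; exact norm_add_le _ _
  have : ‖x - y‖ < 2 - 2 * δ / 3 := by
    have := hδ.symm
    linarith
  linarith
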